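/- arXiv:2309.14145 — 3 statements merged into one kernel-verified Lean document; each statement's English description precedes it below -/
import Mathlib

section
/- Let q : ℕ → ℝ with q(0) ≠ 0, and let γ, δ be real numbers. Suppose the sequence x : ℕ → ℝ satisfies x₀ = 1 + γ and, for every n ≥ 1, ∑_{j=0}^{n−1} q(j)·x_{n−j} + (1 − ∑_{i=0}^{n−1} q(i))·x₀ = 1 + γ + δ·∑_{j=1}^{n} j·q(n−j). Then xₙ = 1 + γ + n·δ for every n ≥ 0. -/
open scoped BigOperators

/-- the order-`n` non-homogeneous recurrence with variable coefficients
arising from the weak-feedback stationarity conditions,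
`∑_{j=0}^{n-1} q(j)·x_{n-j} + (1 - ∑_{i=0}^{n-1} q(i))·x₀
  = 1 + γ + δ·∑_{j=1}^{n} j·q(n-j)` for `n ≥ 1`, with `x₀ = 1 + γ` and `q 0 ≠ 0`,
has the unique solution `xₙ = 1 + γ + n·δ`. -/
theorem weakFB_recurrence_solution (q : ℕ → ℝ) (hq : q 0 ≠ 0) (γ δ : ℝ)
    (x : ℕ → ℝ) (h0 : x 0 = 1 + γ)
    (hrec : ∀ n : ℕ, 1 ≤ n →
      (∑ j ∈ Finset.range n, q j * x (n - j))
        + (1 - ∑ i ∈ Finset.range n, q i) * x 0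
      = 1 + γ + δ * ∑ j ∈ Finset.Icc 1 n, (j : ℝ) * q (n - j)) :
    ∀ n : ℕ, x n = 1 + γ + n * δ := by
  intro n
  induction n using Nat.strong_induction_on with
  | _ n ih =>
  match n with
  | 0 => simpa using h0
  | m + 1 =>
    have hn := hrec (m+1) (Nat.le_add_left 1 m)
    have hA : ∑ j ∈ Finset.range (m+1), q j * x (m+1-j)
        = (∑ j ∈ Finset.range m,
            (q (j+1) * (1+γ) + ((m-j : ℕ) : ℝ) * q (j+1) * δ)) + q 0 * x (m+1) := by
      rw [Finset.sum_range_succ']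
      congr 1
      apply Finset.sum_congr rfl
      intro j hj
      simp only [Finset.mem_range] at hj
      have h1 : m + 1 - (j+1) = m - j := by omega
      rw [h1, ih (m-j) (by omega)]
      ring
    have hB : ∑ j ∈ Finset.Icc 1 (m+1), (j:ℝ) * q (m+1-j)
        = (∑ j ∈ Finset.range m, ((m-j : ℕ) : ℝ) * q (j+1)) + ((m:ℝ)+1) * q 0 := by
      rw [← Finset.Ico_add_one_right_eq_Icc, Finset.sum_Ico_eq_sum_range]
      have h2 : m + 1 + 1 - 1 = m + 1 := by omega
      rw [h2, Finset.sum_range_succ]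
      congr 1
      · rw [← Finset.sum_range_reflect]
        apply Finset.sum_congr rfl
        intro j hj
        simp only [Finset.mem_range] at hj
        have e1 : 1 + (m - 1 - j) = m - j := by omega
        have e2 : m + 1 - (m - j) = j + 1 := by omega
        rw [e1, e2]
      · have e3 : m + 1 - (1 + m) = 0 := by omega
        rw [e3]
        push_cast
        ring
    have hC : ∑ i ∈ Finset.range (m+1), q i
        = (∑ j ∈ Finset.range m, q (j+1)) + q 0 := Finset.sum_range_succ' q m
    rw [hA, hB, hC, Finset.sum_add_distrib, h0] at hn
    have key : q 0 * x (m+1) = q 0 * (1 + γ + ((m:ℝ)+1) * δ) := by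
      have d1 : ∑ j ∈ Finset.range m, q (j+1) * (1+γ)
          = (∑ j ∈ Finset.range m, q (j+1)) * (1+γ) := by
        rw [Finset.sum_mul]
      have d2 : ∑ j ∈ Finset.range m, ((m-j : ℕ) : ℝ) * q (j+1) * δ
          = (∑ j ∈ Finset.range m, ((m-j : ℕ) : ℝ) * q (j+1)) * δ := by
        rw [Finset.sum_mul]
      rw [d1, d2] at hn
      linear_combination hn
    have := mul_left_cancel₀ hq key
    rw [this]
    push_cast
    ring
end

section
/- Let p be a pmf on ℕ with finite mean. Define F : [0,∞) → ℝ by F(c) = sup{ H(w ⋆ p) : w a pmf on ℕ with mean ∑ₙ n·w(n) ≤ c }, where (w ⋆ p)(n) = ∑_{j=0}^{n} w(j)·p(n−j). Then F is real-valued (finite), nonnegative, nondecreasing, and concave on [0,∞). -/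
open scoped BigOperators

/-- Shannon entropy (natural log) of a pmf on ℕ. -/
noncomputable def Hent (p : ℕ → ℝ) : ℝ := ∑' n, -(p n * Real.log (p n))

/-- `p` is a probability mass function on ℕ. -/
def IsPmf (p : ℕ → ℝ) : Prop := (∀ n, 0 ≤ p n) ∧ (∑' n, p n) = 1

/-- pmf of `W + S` for independent `W ~ w`, `S ~ p`. -/
noncomputable def convPmf (w p : ℕ → ℝ) : ℕ → ℝ :=
  fun n => ∑ j ∈ Finset.range (n + 1), w j * p (n - j)

/-- pmf of `(S - τ)₊` for `S ~ p` (truncated subtraction on ℕ). -/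
noncomputable def truncSubPmf (p : ℕ → ℝ) (τ : ℕ) : ℕ → ℝ :=
  fun n => ∑' i, if i - τ = n then p i else 0

/-- pmf of `(X - T)₊` for independent `X ~ x`, `T ~ q`. -/
noncomputable def subPairPmf (x q : ℕ → ℝ) : ℕ → ℝ :=
  fun n => ∑' i, ∑' j, if i - j = n then x i * q j else 0

/-- `w` has (well-defined) mean at most `c`. -/
def MeanLe (w : ℕ → ℝ) (c : ℝ) : Prop :=
  Summable (fun n : ℕ => (n : ℝ) * w n) ∧ (∑' n : ℕ, (n : ℝ) * w n) ≤ c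

/-- Output entropies `H((X - (S₁ - τ)₊)₊ + S₂)` over admissible laws of `X`
(independent of `(S₁, S₂)`, with `E[(X - (S₁ - τ)₊)₊] ≤ c`);
this is the generalized-feedback maximum output entropy problem. -/
def genFB (p : ℕ → ℝ) (τ : ℕ) (c : ℝ) : Set ℝ :=
  {h | ∃ x : ℕ → ℝ, IsPmf x ∧
    MeanLe (subPairPmf x (truncSubPmf p τ)) c ∧
    h = Hent (convPmf (subPairPmf x (truncSubPmf p τ)) p)}

/-- Output entropies `H(W + S)` over admissible laws of `W` (independent of `S`,
nonnegative, with `E[W] ≤ c`); this is the full-feedback maximum output entropy problem. -/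
def fullFB (p : ℕ → ℝ) (c : ℝ) : Set ℝ :=
  {h | ∃ w : ℕ → ℝ, IsPmf w ∧ MeanLe w c ∧ h = Hent (convPmf w p)}

-- pmf summable
lemma IsPmf.summable {p : ℕ → ℝ} (hp : IsPmf p) : Summable p := by
  by_contra h
  have h2 := hp.2
  rw [tsum_eq_zero_of_not_summable h] at h2
  exact one_ne_zero h2.symm

lemma IsPmf.le_one {p : ℕ → ℝ} (hp : IsPmf p) (n : ℕ) : p n ≤ 1 := by
  have := Summable.le_tsum hp.summable n (fun m _ => hp.1 m)
  rw [hp.2] at this; exact this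

-- conv is pmf
lemma convPmf_isPmf {w p : ℕ → ℝ} (hw : IsPmf w) (hp : IsPmf p) :
    IsPmf (convPmf w p) ∧ Summable (convPmf w p) := by
  have hprod : Summable fun x : ℕ × ℕ => w x.1 * p x.2 :=
    hw.summable.mul_of_nonneg hp.summable hw.1 hp.1
  have hs : Summable (convPmf w p) := summable_sum_mul_range_of_summable_mul hprod
  have ht : (∑' n, convPmf w p n) = 1 := by
    have := Summable.tsum_mul_tsum_eq_tsum_sum_range hw.summable hp.summable hprod
    rw [hw.2, hp.2, one_mul] at this
    exact this.symm
  refine ⟨⟨fun n => Finset.sum_nonneg fun j _ => mul_nonneg (hw.1 j) (hp.1 (n - j)), ht⟩, hs⟩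

-- mean of conv
set_option maxHeartbeats 2000000 in
lemma convPmf_mean {w p : ℕ → ℝ} (hw : IsPmf w) (hp : IsPmf p)
    (hmw : Summable (fun n : ℕ => (n : ℝ) * w n))
    (hmp : Summable (fun n : ℕ => (n : ℝ) * p n)) :
    Summable (fun n : ℕ => (n : ℝ) * convPmf w p n) ∧
      (∑' n : ℕ, (n : ℝ) * convPmf w p n)
        = (∑' n : ℕ, (n : ℝ) * w n) + ∑' n : ℕ, (n : ℝ) * p n := by
  have hwpos : (0 : ℕ → ℝ) ≤ fun n : ℕ => (n : ℝ) * w n :=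
    fun n => mul_nonneg (Nat.cast_nonneg n) (hw.1 n)
  have hppos : (0 : ℕ → ℝ) ≤ fun n : ℕ => (n : ℝ) * p n :=
    fun n => mul_nonneg (Nat.cast_nonneg n) (hp.1 n)
  have hp1 := hmw.mul_of_nonneg hp.summable hwpos hp.1
  have hp2 := hw.summable.mul_of_nonneg hmp hw.1 hppos
  have h1 := summable_sum_mul_range_of_summable_mul
    (f := fun k : ℕ => (k : ℝ) * w k) (g := p) hp1
  have h2 := summable_sum_mul_range_of_summable_mul
    (f := w) (g := fun l : ℕ => (l : ℝ) * p l) hp2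
  have key : ∀ n : ℕ, (n : ℝ) * convPmf w p n
      = (∑ k ∈ Finset.range (n+1), ((k : ℝ) * w k) * p (n - k))
        + ∑ k ∈ Finset.range (n+1), w k * (((n - k : ℕ) : ℝ) * p (n - k)) := by
    intro n
    rw [convPmf, Finset.mul_sum, ← Finset.sum_add_distrib]
    refine Finset.sum_congr rfl fun k hk => ?_
    have hk' : k ≤ n := Nat.lt_succ_iff.mp (Finset.mem_range.mp hk)
    have hc : ((n - k : ℕ) : ℝ) = (n : ℝ) - (k : ℝ) := by
      push_cast [hk']; ring
    rw [hc]; ring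
  constructor
  · exact (h1.add h2).congr fun n => (key n).symm
  · have e1 := Summable.tsum_mul_tsum_eq_tsum_sum_range hmw hp.summable hp1
    have e2 := Summable.tsum_mul_tsum_eq_tsum_sum_range hw.summable hmp hp2
    rw [hp.2, mul_one] at e1
    rw [hw.2, one_mul] at e2
    calc (∑' n : ℕ, (n : ℝ) * convPmf w p n)
        = ∑' n : ℕ, ((∑ k ∈ Finset.range (n+1), ((k : ℝ) * w k) * p (n - k))
            + ∑ k ∈ Finset.range (n+1), w k * (((n - k : ℕ) : ℝ) * p (n - k))) := by
          exact tsum_congr key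
      _ = _ := by rw [Summable.tsum_add h1 h2, ← e1, ← e2]

-- the elementary entropy term bound
lemma entropy_term_bound (n : ℕ) {x : ℝ} (hx : 0 ≤ x) :
    -(x * Real.log x) ≤ 1 / ((n : ℝ) + 1) ^ 2 + 2 * ((n : ℝ) * x) := by
  rcases eq_or_lt_of_le hx with h | h
  · rw [← h]; simp; positivity
  · have hn1 : (0 : ℝ) < (n : ℝ) + 1 := by positivity
    have hlog : Real.log x = Real.log (x * ((n : ℝ) + 1) ^ 2) - Real.log (((n : ℝ) + 1) ^ 2) := by
      rw [Real.log_mul h.ne' (by positivity)]; ring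
    have hb1 : Real.log (1 / (x * ((n : ℝ) + 1) ^ 2)) ≤ 1 / (x * ((n : ℝ) + 1) ^ 2) - 1 :=
      Real.log_le_sub_one_of_pos (by positivity)
    have hb1' : -Real.log (x * ((n : ℝ) + 1) ^ 2) ≤ 1 / (x * ((n : ℝ) + 1) ^ 2) - 1 := by
      rwa [Real.log_div one_ne_zero (by positivity), Real.log_one, zero_sub] at hb1
    have hb2 : Real.log (((n : ℝ) + 1) ^ 2) = 2 * Real.log ((n : ℝ) + 1) := by
      have := Real.log_pow ((n : ℝ) + 1) 2
      push_cast at this; linarith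
    have hb3 : Real.log ((n : ℝ) + 1) ≤ (n : ℝ) := by
      have := Real.log_le_sub_one_of_pos hn1
      linarith
    have hx' : x * (1 / (x * ((n : ℝ) + 1) ^ 2)) = 1 / (((n : ℝ) + 1) ^ 2) := by
      field_simp
    have hsq : (0 : ℝ) < ((n : ℝ) + 1) ^ 2 := by positivity
    nlinarith [mul_le_mul_of_nonneg_left hb1' hx, mul_le_mul_of_nonneg_left hb3 hx,
      mul_pos h hsq]

-- summable 1/(n+1)^2
lemma summable_inv_sq : Summable (fun n : ℕ => 1 / ((n : ℝ) + 1) ^ 2) := by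
  have h0 : Summable (fun n : ℕ => 1 / (n : ℝ) ^ 2) :=
    Real.summable_one_div_nat_pow.mpr one_lt_two
  have := (summable_nat_add_iff 1).mpr h0
  exact this.congr fun n => by push_cast; ring_nf

-- entropy summability and bound
lemma Hent_bound {q : ℕ → ℝ} (hq : IsPmf q) (hs : Summable fun n : ℕ => (n : ℝ) * q n) :
    Summable (fun n : ℕ => -(q n * Real.log (q n))) ∧
      Hent q ≤ (∑' n : ℕ, 1 / ((n : ℝ) + 1) ^ 2) + 2 * ∑' n : ℕ, (n : ℝ) * q n := by
  have hnn : ∀ n : ℕ, 0 ≤ -(q n * Real.log (q n)) := by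
    intro n
    have := Real.negMulLog_nonneg (hq.1 n) (hq.le_one n)
    rwa [Real.negMulLog_eq_neg] at this
  have hbd : ∀ n : ℕ, -(q n * Real.log (q n)) ≤ 1 / ((n : ℝ) + 1) ^ 2 + 2 * ((n : ℝ) * q n) :=
    fun n => entropy_term_bound n (hq.1 n)
  have hmaj : Summable (fun n : ℕ => 1 / ((n : ℝ) + 1) ^ 2 + 2 * ((n : ℝ) * q n)) :=
    summable_inv_sq.add (hs.mul_left 2)
  have hsum : Summable (fun n : ℕ => -(q n * Real.log (q n))) :=
    Summable.of_nonneg_of_le hnn hbd hmaj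
  refine ⟨hsum, ?_⟩
  calc Hent q ≤ ∑' n : ℕ, (1 / ((n : ℝ) + 1) ^ 2 + 2 * ((n : ℝ) * q n)) :=
        Summable.tsum_le_tsum hbd hsum hmaj
    _ = _ := by rw [Summable.tsum_add summable_inv_sq (hs.mul_left 2), tsum_mul_left]

lemma convPmf_combo (w₁ w₂ p : ℕ → ℝ) (a b : ℝ) (n : ℕ) :
    convPmf (fun m => a * w₁ m + b * w₂ m) p n
      = a * convPmf w₁ p n + b * convPmf w₂ p n := by
  simp only [convPmf, Finset.mul_sum, ← Finset.sum_add_distrib]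
  exact Finset.sum_congr rfl fun j _ => by ring


/-- `F c = sup { H(w ⋆ p) : w a pmf on ℕ with mean ≤ c }` is
finite (the sup is of a nonempty, bounded-above set), nonnegative, nondecreasing,
and concave on `[0, ∞)`. -/
theorem fullFB_entropy_concave (p : ℕ → ℝ) (hp : IsPmf p)
    (hmean : Summable (fun n : ℕ => (n : ℝ) * p n))
    (F : ℝ → ℝ) (hF : ∀ c : ℝ, F c = sSup (fullFB p c)) :
    (∀ c ∈ Set.Ici (0 : ℝ), (fullFB p c).Nonempty ∧ BddAbove (fullFB p c) ∧ 0 ≤ F c)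
      ∧ MonotoneOn F (Set.Ici (0 : ℝ))
      ∧ ConcaveOn ℝ (Set.Ici (0 : ℝ)) F := by
  set Ep := ∑' n : ℕ, (n : ℝ) * p n with hEp
  set K := ∑' n : ℕ, 1 / ((n : ℝ) + 1) ^ 2 with hKdef
  -- master facts about any admissible w
  have master : ∀ c : ℝ, ∀ w : ℕ → ℝ, IsPmf w → MeanLe w c →
      IsPmf (convPmf w p) ∧
      Summable (fun n : ℕ => -(convPmf w p n * Real.log (convPmf w p n))) ∧
      0 ≤ Hent (convPmf w p) ∧ Hent (convPmf w p) ≤ K + 2 * (c + Ep) := by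
    intro c w hw hmw
    obtain ⟨hq, _⟩ := convPmf_isPmf hw hp
    obtain ⟨hqs, hqt⟩ := convPmf_mean hw hp hmw.1 hmean
    have hqm : (∑' n : ℕ, (n : ℝ) * convPmf w p n) ≤ c + Ep := by
      rw [hqt]; exact add_le_add_left hmw.2 Ep
    obtain ⟨hes, heb⟩ := Hent_bound hq hqs
    refine ⟨hq, hes, ?_, ?_⟩
    · refine tsum_nonneg fun n => ?_
      have := Real.negMulLog_nonneg (hq.1 n) (hq.le_one n)
      rwa [Real.negMulLog_eq_neg] at this
    · refine heb.trans ?_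
      have h2 : 2 * (∑' n : ℕ, (n : ℝ) * convPmf w p n) ≤ 2 * (c + Ep) := by linarith
      linarith
  -- the Dirac mass at 0
  have hdirac : IsPmf (fun n : ℕ => if n = 0 then (1 : ℝ) else 0) := by
    constructor
    · intro n; dsimp only; split <;> norm_num
    · exact tsum_ite_eq 0 (fun _ => (1 : ℝ))
  have hdmean : ∀ c : ℝ, 0 ≤ c → MeanLe (fun n : ℕ => if n = 0 then (1 : ℝ) else 0) c := by
    intro c hc
    have hz : (fun n : ℕ => (n : ℝ) * if n = 0 then (1 : ℝ) else 0) = 0 := by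
      funext n; rcases n with _ | n <;> simp
    constructor
    · rw [hz]; exact summable_zero
    · rw [hz]
      calc tsum (0 : ℕ → ℝ) = 0 := tsum_zero
        _ ≤ c := hc
  have hmem : ∀ c : ℝ, 0 ≤ c →
      Hent (convPmf (fun n : ℕ => if n = 0 then (1 : ℝ) else 0) p) ∈ fullFB p c :=
    fun c hc => ⟨_, hdirac, hdmean c hc, rfl⟩
  have hbdd : ∀ c : ℝ, BddAbove (fullFB p c) := by
    intro c
    refine ⟨K + 2 * (c + Ep), fun h hh => ?_⟩
    obtain ⟨w, hw, hm, rfl⟩ := hh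
    exact (master c w hw hm).2.2.2
  have hne : ∀ c : ℝ, 0 ≤ c → (fullFB p c).Nonempty := fun c hc => ⟨_, hmem c hc⟩
  have hFnn : ∀ c : ℝ, 0 ≤ c → 0 ≤ F c := by
    intro c hc
    rw [hF c]
    refine le_trans ?_ (le_csSup (hbdd c) (hmem c hc))
    exact (master c _ hdirac (hdmean c hc)).2.2.1
  have hmono : MonotoneOn F (Set.Ici (0 : ℝ)) := by
    intro c hc d _ hcd
    rw [hF c, hF d]
    refine csSup_le_csSup (hbdd d) (hne c hc) ?_
    rintro h ⟨w, hw, hm, he⟩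
    exact ⟨w, hw, ⟨hm.1, hm.2.trans hcd⟩, he⟩
  refine ⟨fun c hc => ⟨hne c hc, hbdd c, hFnn c hc⟩, hmono, convex_Ici 0, ?_⟩
  intro x hx y hy a b ha hb hab
  simp only [smul_eq_mul]
  have hx0 : (0 : ℝ) ≤ x := hx
  have hy0 : (0 : ℝ) ≤ y := hy
  have hz0 : (0 : ℝ) ≤ a * x + b * y := add_nonneg (mul_nonneg ha hx0) (mul_nonneg hb hy0)
  -- key mixing inequality
  have hkey : ∀ h₁ ∈ fullFB p x, ∀ h₂ ∈ fullFB p y, a * h₁ + b * h₂ ≤ F (a * x + b * y) := by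
    rintro h₁ ⟨w₁, hw₁, hm₁, rfl⟩ h₂ ⟨w₂, hw₂, hm₂, rfl⟩
    set wm : ℕ → ℝ := fun n => a * w₁ n + b * w₂ n with hwm
    have hwm_s : Summable wm := (hw₁.summable.mul_left a).add (hw₂.summable.mul_left b)
    have hwm_pmf : IsPmf wm := by
      constructor
      · intro n; exact add_nonneg (mul_nonneg ha (hw₁.1 n)) (mul_nonneg hb (hw₂.1 n))
      · rw [Summable.tsum_add (hw₁.summable.mul_left a) (hw₂.summable.mul_left b),
          tsum_mul_left, tsum_mul_left, hw₁.2, hw₂.2, mul_one, mul_one, hab]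
    have hwm_mean : MeanLe wm (a * x + b * y) := by
      have hfe : (fun n : ℕ => (n : ℝ) * wm n)
          = fun n : ℕ => a * ((n : ℝ) * w₁ n) + b * ((n : ℝ) * w₂ n) := by
        funext n; simp only [hwm]; ring
      constructor
      · rw [hfe]; exact (hm₁.1.mul_left a).add (hm₂.1.mul_left b)
      · rw [hfe, Summable.tsum_add (hm₁.1.mul_left a) (hm₂.1.mul_left b), tsum_mul_left, tsum_mul_left]
        exact add_le_add (mul_le_mul_of_nonneg_left hm₁.2 ha) (mul_le_mul_of_nonneg_left hm₂.2 hb)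
    obtain ⟨hq₁, hes₁, _, _⟩ := master x w₁ hw₁ hm₁
    obtain ⟨hq₂, hes₂, _, _⟩ := master y w₂ hw₂ hm₂
    obtain ⟨hqm, hesm, _, _⟩ := master (a * x + b * y) wm hwm_pmf hwm_mean
    -- pointwise concavity
    have cpt : ∀ n : ℕ,
        a * (-(convPmf w₁ p n * Real.log (convPmf w₁ p n)))
          + b * (-(convPmf w₂ p n * Real.log (convPmf w₂ p n)))
        ≤ -(convPmf wm p n * Real.log (convPmf wm p n)) := by
      intro n
      have hcc := Real.concaveOn_negMulLog.2 (Set.mem_Ici.mpr (hq₁.1 n))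
        (Set.mem_Ici.mpr (hq₂.1 n)) ha hb hab
      rw [Real.negMulLog_eq_neg] at hcc
      simp only [smul_eq_mul] at hcc
      have hmix : convPmf wm p n = a * convPmf w₁ p n + b * convPmf w₂ p n :=
        convPmf_combo w₁ w₂ p a b n
      rw [hmix]
      exact hcc
    have hts : a * Hent (convPmf w₁ p) + b * Hent (convPmf w₂ p) ≤ Hent (convPmf wm p) := by
      have hsum : Summable (fun n : ℕ =>
          a * (-(convPmf w₁ p n * Real.log (convPmf w₁ p n)))
            + b * (-(convPmf w₂ p n * Real.log (convPmf w₂ p n)))) :=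
        (hes₁.mul_left a).add (hes₂.mul_left b)
      have := Summable.tsum_le_tsum cpt hsum hesm
      rw [Summable.tsum_add (hes₁.mul_left a) (hes₂.mul_left b), tsum_mul_left, tsum_mul_left] at this
      exact this
    refine hts.trans ?_
    rw [hF (a * x + b * y)]
    exact le_csSup (hbdd _) ⟨wm, hwm_pmf, hwm_mean, rfl⟩
  -- sup juggling
  rcases eq_or_lt_of_le ha with rfl | ha'
  · have hb1 : b = 1 := by linarith
    simp [hb1]
  rcases eq_or_lt_of_le hb with rfl | hb'
  · have ha1 : a = 1 := by linarith
    simp [ha1]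
  have step1 : ∀ h₁ ∈ fullFB p x, a * h₁ + b * F y ≤ F (a * x + b * y) := by
    intro h₁ hh₁
    have hFy : F y ≤ (F (a * x + b * y) - a * h₁) / b := by
      rw [hF y]
      refine csSup_le (hne y hy0) fun h₂ hh₂ => ?_
      rw [le_div_iff₀ hb']
      have := hkey h₁ hh₁ h₂ hh₂
      linarith
    have := mul_le_mul_of_nonneg_left hFy hb
    have hcan : b * ((F (a * x + b * y) - a * h₁) / b) = F (a * x + b * y) - a * h₁ := by
      field_simp
    linarith
  have hFx : F x ≤ (F (a * x + b * y) - b * F y) / a := by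
    rw [hF x]
    refine csSup_le (hne x hx0) fun h₁ hh₁ => ?_
    rw [le_div_iff₀ ha']
    have := step1 h₁ hh₁
    linarith
  have := mul_le_mul_of_nonneg_left hFx ha
  have hcan : a * ((F (a * x + b * y) - b * F y) / a) = F (a * x + b * y) - b * F y := by
    field_simp
  linarith
end

section
/- Let 0 < λ < μ and set β = λ²/μ². Let S be an exponential random variable with rate μ (mean 1/μ), and let X be independent of S with law β·δ₀ + (1−β)·Exp(λ), i.e., P(X = 0) = β and X has density (1−β)·λ·e^{−λx} on (0,∞). Then the random variable (X − S)₊ = max(X − S, 0) has law (λ/μ)·δ₀ + (1 − λ/μ)·Exp(λ), i.e., P((X−S)₊ = 0) = λ/μ and (X−S)₊ has density (1 − λ/μ)·λ·e^{−λx} on (0,∞). In particular E[(X−S)₊] = 1/λ − 1/μ. -/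
open MeasureTheory

/-- The measure on ℝ with density `f` with respect to Lebesgue measure. -/
noncomputable def densMeasure (f : ℝ → ℝ) : Measure ℝ :=
  MeasureTheory.volume.withDensity fun x => ENNReal.ofReal (f x)

/-- Differential entropy (natural log) of a density `g` on ℝ. -/
noncomputable def dEnt (g : ℝ → ℝ) : ℝ := ∫ t, -(g t * Real.log (g t))

/-- Density of `Z + S` where `Z ~ ν` and `S` (independent of `Z`) has density `f`. -/
noncomputable def addDens (f : ℝ → ℝ) (ν : Measure ℝ) : ℝ → ℝ :=
  fun t => ∫ s, f (t - s) ∂ν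

/-- Law of `(X - T)₊` for independent `X ~ ν`, `T ~ κ`. -/
noncomputable def subPosLaw (ν κ : Measure ℝ) : Measure ℝ :=
  (ν.prod κ).map fun q => max (q.1 - q.2) 0

/-- The (nonnegative) measure `κ` has mean at most `c`. -/
def meanLeM (κ : Measure ℝ) (c : ℝ) : Prop :=
  (∫⁻ x, ENNReal.ofReal x ∂κ) ≤ ENNReal.ofReal c

/-- Differential output entropies `h(W + S)` over admissible laws `ν` of `W`
(nonnegative, independent of `S` which has density `f`, with `E[W] ≤ c`);
the full-feedback maximum output entropy problem. -/
def fullFBc (f : ℝ → ℝ) (c : ℝ) : Set ℝ :=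
  {h | ∃ ν : Measure ℝ, IsProbabilityMeasure ν ∧ ν (Set.Iio 0) = 0 ∧
    meanLeM ν c ∧ h = dEnt (addDens f ν)}

/-- Differential output entropies `h((X - S₁)₊ + S₂)` over admissible laws `ν` of `X`
(nonnegative, independent of `(S₁, S₂)` which are i.i.d. with density `f`, with
`E[(X - S₁)₊] ≤ c`); the weak-feedback maximum output entropy problem. -/
def weakFBc (f : ℝ → ℝ) (c : ℝ) : Set ℝ :=
  {h | ∃ ν : Measure ℝ, IsProbabilityMeasure ν ∧ ν (Set.Iio 0) = 0 ∧
    meanLeM (subPosLaw ν (densMeasure f)) c ∧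
    h = dEnt (addDens f (subPosLaw ν (densMeasure f)))}

/-- Differential output entropies `h((X - (S₁ - τ)₊)₊ + S₂)` over admissible laws `ν`
of `X` (nonnegative, independent of `(S₁, S₂)` which are i.i.d. with density `f`, with
`E[(X - (S₁ - τ)₊)₊] ≤ c`); the generalized-feedback maximum output entropy problem. -/
def genFBc (f : ℝ → ℝ) (τ : ℝ) (c : ℝ) : Set ℝ :=
  {h | ∃ ν : Measure ℝ, IsProbabilityMeasure ν ∧ ν (Set.Iio 0) = 0 ∧
    meanLeM (subPosLaw ν ((densMeasure f).map fun s => max (s - τ) 0)) c ∧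
    h = dEnt (addDens f (subPosLaw ν ((densMeasure f).map fun s => max (s - τ) 0)))}

/-- Density of the exponential distribution with rate `r` (on `[0, ∞)`). -/
noncomputable def expDens (r : ℝ) : ℝ → ℝ :=
  fun x => if 0 ≤ x then r * Real.exp (-(r * x)) else 0

/-- The exponential distribution with rate `r`. -/
noncomputable def expM (r : ℝ) : Measure ℝ :=
  MeasureTheory.volume.withDensity fun x => ENNReal.ofReal (expDens r x)

/-- The mixture `β·δ₀ + (1 - β)·Exp(r)`. -/
noncomputable def diracExpMix (β r : ℝ) : Measure ℝ :=
  ENNReal.ofReal β • Measure.dirac 0 + ENNReal.ofReal (1 - β) • expM r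


section Aux

open ProbabilityTheory Real Set Filter
open scoped ENNReal

lemma expM_eq (r : ℝ) : expM r = expMeasure r := by
  rw [expM, expMeasure, gammaMeasure]
  congr 1
  funext x
  rw [show gammaPDF 1 r x = exponentialPDF r x from rfl, exponentialPDF_eq]
  rfl

lemma expM_prob {r : ℝ} (hr : 0 < r) : IsProbabilityMeasure (expM r) := by
  rw [expM_eq]; exact isProbabilityMeasure_expMeasure hr

lemma expM_Iio (r : ℝ) : expM r (Set.Iio 0) = 0 := by
  rw [expM_eq, expMeasure, gammaMeasure, withDensity_apply _ measurableSet_Iio]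
  exact lintegral_gammaPDF_of_nonpos le_rfl

lemma expM_Iic {r : ℝ} (hr : 0 < r) (a : ℝ) :
    expM r (Set.Iic a) = ENNReal.ofReal (if 0 ≤ a then 1 - Real.exp (-(r * a)) else 0) := by
  rw [expM_eq, expMeasure, gammaMeasure, withDensity_apply _ measurableSet_Iic]
  have := lintegral_exponentialPDF_eq_antiDeriv hr a
  rwa [show exponentialPDF r = gammaPDF 1 r from rfl] at this

lemma expM_Ici {r : ℝ} (hr : 0 < r) (t : ℝ) :
    expM r (Set.Ici t) = ENNReal.ofReal (Real.exp (-(r * max t 0))) := by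
  haveI := expM_prob hr
  have hIio : expM r (Set.Iio t) = ENNReal.ofReal (if 0 ≤ t then 1 - Real.exp (-(r * t)) else 0) := by
    rw [← expM_Iic hr t]
    have : Set.Iio t =ᵐ[expM r] Set.Iic t := by
      rw [expM]
      exact Filter.EventuallyEq.filter_mono (Iio_ae_eq_Iic (μ := volume))
        (Measure.ae_le_iff_absolutelyContinuous.mpr (withDensity_absolutelyContinuous _ _))
    exact measure_congr this
  rw [show Set.Ici t = (Set.Iio t)ᶜ from (compl_Iio).symm,
    measure_compl measurableSet_Iio (measure_ne_top _ _), measure_univ, hIio]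
  rcases le_or_gt 0 t with ht | ht
  · rw [if_pos ht, max_eq_left ht]
    rw [← ENNReal.ofReal_one,
      ← ENNReal.ofReal_sub _ (by nlinarith [Real.exp_le_one_iff.mpr (show -(r*t) ≤ 0 by nlinarith)])]
    congr 1
    have h1 : Real.exp (-(r * t)) ≤ 1 := Real.exp_le_one_iff.mpr (by nlinarith)
    ring_nf
  · rw [if_neg (not_le.mpr ht), max_eq_right ht.le]
    simp [Real.exp_le_one_iff]

lemma tendsto_exp_neg_mul {r : ℝ} (hr : 0 < r) :
    Tendsto (fun x : ℝ => Real.exp (-(r * x))) atTop (nhds 0) :=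
  Real.tendsto_exp_atBot.comp (tendsto_neg_atTop_atBot.comp (tendsto_id.const_mul_atTop hr))

lemma neg_tendsto_exp_neg_mul {r : ℝ} (hr : 0 < r) :
    Tendsto (fun x : ℝ => -Real.exp (-(r * x))) atTop (nhds 0) := by
  simpa using (tendsto_exp_neg_mul hr).neg

lemma exp_tail {c : ℝ} (b : ℝ) (hc : 0 < c) :
    ∫ x in Set.Ioi b, c * Real.exp (-(c * x)) = Real.exp (-(c * b)) := by
  have h := integral_Ioi_of_hasDerivAt_of_nonneg' (a := b) (l := 0)
    (g := fun x => -Real.exp (-(c * x))) (g' := fun x => c * Real.exp (-(c * x)))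
    (fun x _ => hasDerivAt_neg_exp_mul_exp)
    (fun x _ => by positivity) (neg_tendsto_exp_neg_mul hc)
  rw [h]; ring

lemma exp_tail_int {c : ℝ} (b : ℝ) (hc : 0 < c) :
    IntegrableOn (fun x => c * Real.exp (-(c * x))) (Set.Ioi b) :=
  integrableOn_Ioi_deriv_of_nonneg' (g := fun x => -Real.exp (-(c * x)))
    (fun x _ => hasDerivAt_neg_exp_mul_exp)
    (fun x _ => by positivity) (neg_tendsto_exp_neg_mul hc)

lemma exp_interval {c : ℝ} (a : ℝ) (ha : 0 ≤ a) (hc : 0 < c) :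
    ∫ x in Set.Ioc 0 a, c * Real.exp (-(c * x)) = 1 - Real.exp (-(c * a)) := by
  rw [← intervalIntegral.integral_of_le ha,
    intervalIntegral.integral_eq_sub_of_hasDerivAt
      (f := fun x => -Real.exp (-(c * x))) (fun x _ => hasDerivAt_neg_exp_mul_exp) ?_]
  · simp
    ring
  · apply Continuous.intervalIntegrable
    continuity

lemma mean_tendsto {r : ℝ} (hr : 0 < r) :
    Tendsto (fun x : ℝ => -((x + 1 / r) * Real.exp (-(r * x)))) atTop (nhds 0) := by
  have t1 : Tendsto (fun y : ℝ => y * Real.exp (-y)) atTop (nhds 0) := by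
    simpa using Real.tendsto_pow_mul_exp_neg_atTop_nhds_zero 1
  have t2 : Tendsto (fun x : ℝ => (r * x) * Real.exp (-(r * x))) atTop (nhds 0) :=
    t1.comp (tendsto_id.const_mul_atTop hr)
  have t3 := ((t2.const_mul (1 / r)).add ((tendsto_exp_neg_mul hr).const_mul (1 / r))).neg
  simp only [mul_zero, add_zero, neg_zero] at t3
  apply t3.congr
  intro x
  field_simp

lemma mean_deriv {r : ℝ} (hr : 0 < r) (x : ℝ) :
    HasDerivAt (fun x : ℝ => -((x + 1 / r) * Real.exp (-(r * x))))
      (x * (r * Real.exp (-(r * x)))) x := by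
  have h1 : HasDerivAt (fun x : ℝ => x + 1 / r) 1 x := (hasDerivAt_id x).add_const _
  have h2 : HasDerivAt (fun x : ℝ => Real.exp (-(r * x))) (-r * Real.exp (-(r * x))) x := by
    have := ((hasDerivAt_id x).const_mul r).neg.exp
    simp only [id_eq, mul_one] at this
    rw [show -r * Real.exp (-(r * x)) = Real.exp (-(r * x)) * -r by ring]
    exact this
  have := (h1.mul h2).neg
  refine this.congr_deriv ?_
  linear_combination (Real.exp (-(r * x))) * one_div_mul_cancel hr.ne'

lemma mean_tail {r : ℝ} (hr : 0 < r) :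
    ∫ x in Set.Ioi (0:ℝ), x * (r * Real.exp (-(r * x))) = 1 / r := by
  have h := integral_Ioi_of_hasDerivAt_of_nonneg' (a := 0) (l := 0)
    (fun x _ => mean_deriv hr x)
    (fun x hx => by have : (0:ℝ) < x := hx; positivity) (mean_tendsto hr)
  rw [h]; simp

lemma mean_tail_int {r : ℝ} (hr : 0 < r) :
    IntegrableOn (fun x => x * (r * Real.exp (-(r * x)))) (Set.Ioi (0:ℝ)) :=
  integrableOn_Ioi_deriv_of_nonneg' (fun x _ => mean_deriv hr x)
    (fun x hx => by have : (0:ℝ) < x := hx; positivity) (mean_tendsto hr)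

lemma measurable_expDens (r : ℝ) : Measurable (expDens r) := by
  unfold expDens
  exact Measurable.ite measurableSet_Ici (by fun_prop) measurable_const

lemma expDens_nonneg {r : ℝ} (hr : 0 < r) (x : ℝ) : 0 ≤ expDens r x := by
  unfold expDens; split <;> positivity

/-- the main real integral, together with integrability -/
lemma key_integral {lam mu : ℝ} (hlam : 0 < lam) (hmu : lam < mu) (a : ℝ) (ha : 0 ≤ a) :
    (∫ x, expDens lam x * Real.exp (-(mu * max (x - a) 0))
      = 1 - mu / (lam + mu) * Real.exp (-(lam * a)))
    ∧ Integrable (fun x => expDens lam x * Real.exp (-(mu * max (x - a) 0))) := by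
  have hmupos : 0 < mu := hlam.trans hmu
  have hlm : 0 < lam + mu := by linarith
  set H : ℝ → ℝ := fun x => (lam * Real.exp (-(lam * x))) * Real.exp (-(mu * max (x - a) 0)) with hH
  have hind : (fun x => expDens lam x * Real.exp (-(mu * max (x - a) 0)))
      = Set.indicator (Set.Ici 0) H := by
    funext x
    by_cases hx : 0 ≤ x
    · simp [Set.indicator_of_mem, hx, expDens, hH]
    · simp [Set.indicator_of_notMem, hx, expDens, Set.mem_Ici]
  have hIoc : Set.EqOn H (fun x => lam * Real.exp (-(lam * x))) (Set.Ioc 0 a) := by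
    intro x hx
    have : max (x - a) 0 = 0 := max_eq_right (by linarith [hx.2])
    simp [hH, this]
  have hIoi : Set.EqOn H (fun x => (lam / (lam + mu) * Real.exp (mu * a)) *
      ((lam + mu) * Real.exp (-((lam + mu) * x)))) (Set.Ioi a) := by
    intro x hx
    have hxa : max (x - a) 0 = x - a := max_eq_left (by simp at hx; linarith)
    have e1 : Real.exp (-(lam*x)) * Real.exp (-(mu*(x-a)))
        = Real.exp (mu*a) * Real.exp (-((lam+mu)*x)) := by
      rw [← Real.exp_add, ← Real.exp_add]; congr 1; ring
    rw [hH]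
    simp only [hxa]
    rw [mul_assoc, e1]
    field_simp
  have int1 : IntegrableOn H (Set.Ioc 0 a) := by
    apply Continuous.integrableOn_Ioc
    apply Continuous.mul (by continuity)
    exact (Continuous.mul continuous_const ((continuous_id.sub continuous_const).max continuous_const)).neg.rexp
  have int2 : IntegrableOn H (Set.Ioi a) := by
    exact IntegrableOn.congr_fun ((exp_tail_int a hlm).const_mul
      (lam / (lam + mu) * Real.exp (mu * a))) (fun x hx => (hIoi hx).symm) measurableSet_Ioi
  have hsplit : Set.Ioi (0:ℝ) = Set.Ioc 0 a ∪ Set.Ioi a := (Set.Ioc_union_Ioi_eq_Ioi ha).symm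
  constructor
  · rw [hind, integral_indicator measurableSet_Ici, integral_Ici_eq_integral_Ioi, hsplit,
      setIntegral_union (Set.Ioc_disjoint_Ioi le_rfl) measurableSet_Ioi int1 int2,
      setIntegral_congr_fun measurableSet_Ioc hIoc,
      setIntegral_congr_fun measurableSet_Ioi hIoi,
      exp_interval a ha hlam, integral_const_mul, exp_tail a hlm]
    rw [mul_assoc, ← Real.exp_add, show mu * a + -((lam + mu) * a) = -(lam * a) by ring]
    field_simp
    ring
  · rw [hind, integrable_indicator_iff measurableSet_Ici,
      integrableOn_Ici_iff_integrableOn_Ioi, hsplit]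
    exact int1.union int2

lemma measurable_subPos : Measurable (fun q : ℝ × ℝ => max (q.1 - q.2) 0) :=
  (measurable_fst.sub measurable_snd).max measurable_const

lemma mix_prob {b r : ℝ} (hb0 : 0 ≤ b) (hb1 : b ≤ 1) (hr : 0 < r) :
    IsProbabilityMeasure (diracExpMix b r) := by
  haveI := expM_prob hr
  constructor
  rw [diracExpMix, Measure.add_apply, Measure.smul_apply, Measure.smul_apply,
    measure_univ, measure_univ, smul_eq_mul, smul_eq_mul, mul_one, mul_one,
    ← ENNReal.ofReal_add hb0 (by linarith)]
  norm_num

theorem part1 {lam mu : ℝ} (hlam : 0 < lam) (hmu : lam < mu) :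
    subPosLaw (diracExpMix (lam ^ 2 / mu ^ 2) lam) (expM mu)
      = diracExpMix (lam / mu) lam := by
  have hmupos : 0 < mu := hlam.trans hmu
  have hb0 : 0 ≤ lam ^ 2 / mu ^ 2 := by positivity
  have hb1 : lam ^ 2 / mu ^ 2 ≤ 1 := by
    rw [div_le_one (by positivity)]; nlinarith
  have hc0 : 0 ≤ lam / mu := by positivity
  have hc1 : lam / mu ≤ 1 := by rw [div_le_one hmupos]; linarith
  haveI hν : IsProbabilityMeasure (diracExpMix (lam ^ 2 / mu ^ 2) lam) := mix_prob hb0 hb1 hlam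
  haveI hκ : IsProbabilityMeasure (expM mu) := expM_prob hmupos
  haveI hρ : IsProbabilityMeasure (diracExpMix (lam / mu) lam) := mix_prob hc0 hc1 hlam
  haveI : IsProbabilityMeasure ((diracExpMix (lam ^ 2 / mu ^ 2) lam).prod (expM mu)) :=
    inferInstance
  haveI : IsProbabilityMeasure (subPosLaw (diracExpMix (lam ^ 2 / mu ^ 2) lam) (expM mu)) :=
    Measure.isProbabilityMeasure_map measurable_subPos.aemeasurable
  apply Measure.ext_of_Iic
  intro a
  have hRHS : diracExpMix (lam / mu) lam (Set.Iic a)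
      = ENNReal.ofReal (lam / mu) * (Set.Iic a).indicator 1 0
        + ENNReal.ofReal (1 - lam / mu) * ENNReal.ofReal (if 0 ≤ a then 1 - Real.exp (-(lam * a)) else 0) := by
    rw [diracExpMix, Measure.add_apply, Measure.smul_apply, Measure.smul_apply, smul_eq_mul,
      smul_eq_mul, Measure.dirac_apply' _ measurableSet_Iic, expM_Iic hlam]
  rw [subPosLaw, Measure.map_apply measurable_subPos measurableSet_Iic,
    Measure.prod_apply (measurable_subPos measurableSet_Iic), hRHS]
  rcases lt_or_ge a 0 with ha | ha
  · have hpre : ∀ x : ℝ, (Prod.mk x ⁻¹' ((fun q : ℝ × ℝ => max (q.1 - q.2) 0) ⁻¹' Set.Iic a)) = (∅ : Set ℝ) := by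
      intro x
      ext s
      simp only [Set.mem_preimage, Set.mem_Iic, Set.mem_empty_iff_false, iff_false, not_le]
      exact lt_of_lt_of_le ha (le_max_right _ _)
    simp only [hpre, measure_empty, lintegral_zero]
    rw [Set.indicator_of_notMem (by simpa using ha), if_neg (not_le.mpr ha)]
    simp
  · have hpre : ∀ x : ℝ, (Prod.mk x ⁻¹' ((fun q : ℝ × ℝ => max (q.1 - q.2) 0) ⁻¹' Set.Iic a)) = Set.Ici (x - a) := by
      intro x
      ext s
      simp only [Set.mem_preimage, Set.mem_Iic, Set.mem_Ici, max_le_iff]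
      constructor
      · rintro ⟨h1, _⟩; linarith
      · intro h; exact ⟨by linarith, ha⟩
    simp only [hpre]
    have hval : ∀ x : ℝ, expM mu (Set.Ici (x - a)) = ENNReal.ofReal (Real.exp (-(mu * max (x - a) 0))) :=
      fun x => expM_Ici hmupos (x - a)
    simp only [hval]
    set g : ℝ → ℝ≥0∞ := fun x => ENNReal.ofReal (Real.exp (-(mu * max (x - a) 0))) with hg
    have hgmeas : Measurable g := by
      apply Measurable.ennreal_ofReal
      fun_prop
    rw [diracExpMix, lintegral_add_measure, lintegral_smul_measure, lintegral_smul_measure,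
      lintegral_dirac' _ hgmeas]
    have hg0 : g 0 = 1 := by
      rw [hg]
      simp only [zero_sub]
      rw [max_eq_right (by linarith), mul_zero, neg_zero, Real.exp_zero, ENNReal.ofReal_one]
    have hexp : ∫⁻ x, g x ∂(expM lam)
        = ENNReal.ofReal (1 - mu / (lam + mu) * Real.exp (-(lam * a))) := by
      rw [expM, lintegral_withDensity_eq_lintegral_mul _ ((measurable_expDens lam).ennreal_ofReal) hgmeas]
      have heq : (fun x => ENNReal.ofReal (expDens lam x) * g x)
          = fun x => ENNReal.ofReal (expDens lam x * Real.exp (-(mu * max (x - a) 0))) := by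
        funext x
        rw [hg, ENNReal.ofReal_mul (expDens_nonneg hlam x)]
      simp only [Pi.mul_apply]
      rw [heq, ← ofReal_integral_eq_lintegral_ofReal (key_integral hlam hmu a ha).2
        (Filter.Eventually.of_forall (fun x => mul_nonneg (expDens_nonneg hlam x) (Real.exp_pos _).le)),
        (key_integral hlam hmu a ha).1]
    rw [hexp, hg0, smul_eq_mul, smul_eq_mul, mul_one, Set.indicator_of_mem (by simpa using ha) 1, Pi.one_apply, mul_one,
      if_pos ha]
    have e1 : 0 ≤ 1 - mu / (lam + mu) * Real.exp (-(lam * a)) := by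
      have h2 : Real.exp (-(lam * a)) ≤ 1 := Real.exp_le_one_iff.mpr (by nlinarith)
      have h3 : mu / (lam + mu) ≤ 1 := by rw [div_le_one (by linarith)]; linarith
      nlinarith [Real.exp_pos (-(lam * a))]
    have e2 : 0 ≤ 1 - Real.exp (-(lam * a)) := by
      nlinarith [Real.exp_le_one_iff.mpr (show -(lam * a) ≤ 0 by nlinarith)]
    have hb1' : (0:ℝ) ≤ 1 - lam ^ 2 / mu ^ 2 := by linarith
    have hc1' : (0:ℝ) ≤ 1 - lam / mu := by linarith
    rw [← ENNReal.ofReal_mul hb1', ← ENNReal.ofReal_mul hc1',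
      ← ENNReal.ofReal_add hb0 (mul_nonneg hb1' e1), ← ENNReal.ofReal_add hc0 (mul_nonneg hc1' e2)]
    congr 1
    have hne : lam + mu ≠ 0 := by linarith
    have hmune : mu ≠ 0 := by linarith
    field_simp
    ring

lemma id_mul_expDens_eq (r : ℝ) :
    (fun x => x * expDens r x) = Set.indicator (Set.Ici 0) (fun x => x * (r * Real.exp (-(r * x)))) := by
  funext x
  by_cases hx : 0 ≤ x
  · simp [Set.indicator_of_mem, hx, expDens]
  · simp [Set.indicator_of_notMem, hx, expDens, Set.mem_Ici]

lemma integrable_id_mul_expDens {r : ℝ} (hr : 0 < r) :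
    Integrable (fun x => x * expDens r x) := by
  rw [id_mul_expDens_eq, integrable_indicator_iff measurableSet_Ici,
    integrableOn_Ici_iff_integrableOn_Ioi]
  exact mean_tail_int hr

lemma integrable_id_expM {r : ℝ} (hr : 0 < r) :
    Integrable (fun u : ℝ => u) (expM r) := by
  rw [expM, integrable_withDensity_iff ((measurable_expDens r).ennreal_ofReal)
    (Filter.Eventually.of_forall (fun x => ENNReal.ofReal_lt_top))]
  have : (fun x : ℝ => x * (ENNReal.ofReal (expDens r x)).toReal) = fun x => x * expDens r x := by
    funext x
    rw [ENNReal.toReal_ofReal (expDens_nonneg hr x)]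
  rw [this]
  exact integrable_id_mul_expDens hr

lemma integral_id_expM {r : ℝ} (hr : 0 < r) :
    ∫ u, u ∂(expM r) = 1 / r := by
  rw [expM, show (fun x => ENNReal.ofReal (expDens r x)) = (fun x => ((expDens r x).toNNReal : ℝ≥0∞)) from rfl,
    integral_withDensity_eq_integral_smul ((measurable_expDens r).real_toNNReal)]
  have : (fun x : ℝ => (expDens r x).toNNReal • x) = fun x => x * expDens r x := by
    funext x
    rw [NNReal.smul_def, Real.coe_toNNReal _ (expDens_nonneg hr x), smul_eq_mul, mul_comm]
  rw [this, id_mul_expDens_eq, integral_indicator measurableSet_Ici,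
    integral_Ici_eq_integral_Ioi, mean_tail hr]

theorem part2 {lam mu : ℝ} (hlam : 0 < lam) (hmu : lam < mu) :
    ∫ u, u ∂(diracExpMix (lam / mu) lam) = 1 / lam - 1 / mu := by
  have hmupos : 0 < mu := hlam.trans hmu
  have hc1' : (0:ℝ) ≤ 1 - lam / mu := by
    rw [sub_nonneg, div_le_one hmupos]; linarith
  have i1 : Integrable (fun u : ℝ => u) (ENNReal.ofReal (lam / mu) • Measure.dirac 0) := by
    apply Integrable.smul_measure _ ENNReal.ofReal_ne_top
    refine (integrable_const (0:ℝ)).congr ?_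
    rw [Filter.EventuallyEq, ae_dirac_iff (by measurability)]
  have i2 : Integrable (fun u : ℝ => u) (ENNReal.ofReal (1 - lam / mu) • expM lam) :=
    (integrable_id_expM hlam).smul_measure ENNReal.ofReal_ne_top
  rw [diracExpMix, integral_add_measure i1 i2, integral_smul_measure, integral_smul_measure,
    integral_dirac, integral_id_expM hlam, ENNReal.toReal_ofReal hc1']
  simp only [smul_eq_mul, mul_zero, zero_add]
  field_simp

end Aux

/-- if `S ~ Exp(μ)` and `X ⫫ S` with law
`(λ²/μ²)·δ₀ + (1 - λ²/μ²)·Exp(λ)` where `0 < λ < μ`, then `(X - S)₊` has law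
`(λ/μ)·δ₀ + (1 - λ/μ)·Exp(λ)`; in particular `E[(X - S)₊] = 1/λ - 1/μ`. -/

theorem exponential_weakFB_law (lam mu : ℝ) (hlam : 0 < lam) (hmu : lam < mu) :
    subPosLaw (diracExpMix (lam ^ 2 / mu ^ 2) lam) (expM mu)
        = diracExpMix (lam / mu) lam
      ∧ (∫ u, u ∂(subPosLaw (diracExpMix (lam ^ 2 / mu ^ 2) lam) (expM mu)))
        = 1 / lam - 1 / mu := by
  refine ⟨part1 hlam hmu, ?_⟩
  rw [part1 hlam hmu]
  exact part2 hlam hmu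
end
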